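/- There exists a connected graph G with a non-bridge edge e such that χ_dom(G − e) = χ_dom(G) + 2 (the upper bound in the edge-removal theorem is sharp). -/

import Mathlib

open SimpleGraph

/-- A coloring is a dominated coloring if every (nonempty) color class is contained
in the open neighborhood of some vertex. -/
def IsDomColoring {V α : Type*} (G : SimpleGraph V) (C : G.Coloring α) : Prop :=
  ∀ c : α, (∃ u, C u = c) → ∃ v, ∀ u, C u = c → G.Adj v u

/-- The dominated chromatic number of a graph: the least number of colors
in a dominated coloring. -/
noncomputable def domChromatic {V : Type*} (G : SimpleGraph V) : ℕ :=
  sInf {n | ∃ C : G.Coloring (Fin n), IsDomColoring G C}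

def gAdj : Fin 6 → Fin 6 → Bool
  | 0, 3 | 3, 0 | 1, 4 | 4, 1 | 1, 5 | 5, 1 | 2, 5 | 5, 2 | 3, 4 | 4, 3 | 3, 5 | 5, 3 => true
  | _, _ => false

def G6 : SimpleGraph (Fin 6) where
  Adj a b := gAdj a b
  symm := ⟨fun a b h => (by decide : ∀ x y, gAdj x y = true → gAdj y x = true) a b h⟩
  loopless := ⟨fun a => (by decide : ∀ x, ¬ gAdj x x = true) a⟩

instance : DecidableRel G6.Adj := fun a b => inferInstanceAs (Decidable (gAdj a b = true))

def hAdj : Fin 6 → Fin 6 → Bool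
  | 0, 3 | 3, 0 | 1, 4 | 4, 1 | 1, 5 | 5, 1 | 2, 5 | 5, 2 | 3, 4 | 4, 3 => true
  | _, _ => false

lemma del_adj : ∀ a b, (G6.deleteEdges {s(3,5)}).Adj a b ↔ hAdj a b := by
  intro a b
  rw [SimpleGraph.deleteEdges_adj]
  constructor
  · rintro ⟨h1, h2⟩
    simp only [Set.mem_singleton_iff, Sym2.eq, Sym2.rel_iff', Prod.mk.injEq,
      Prod.swap_prod_mk] at h2
    revert h1 h2; revert a b; decide
  · revert a b; decide

instance hDel : DecidableRel (G6.deleteEdges {s((3:Fin 6),(5:Fin 6))}).Adj :=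
  fun a b => decidable_of_iff (hAdj a b = true) (del_adj a b).symm

lemma mem_S_iff {V : Type*} (G : SimpleGraph V) (n : ℕ) :
    (∃ C : G.Coloring (Fin n), IsDomColoring G C) ↔
      ∃ f : V → Fin n, (∀ a b, G.Adj a b → f a ≠ f b) ∧
        ∀ c : Fin n, (∃ u, f u = c) → ∃ v, ∀ u, f u = c → G.Adj v u := by
  constructor
  · rintro ⟨C, hC⟩
    exact ⟨C, fun _ _ h => C.valid h, hC⟩
  · rintro ⟨f, hf, hd⟩
    exact ⟨SimpleGraph.Coloring.mk f (fun h => hf _ _ h), hd⟩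

lemma domChromatic_eq {V : Type*} [Fintype V] [DecidableEq V] (G : SimpleGraph V)
    [DecidableRel G.Adj] (n : ℕ)
    (hmem : ∃ f : V → Fin n, (∀ a b, G.Adj a b → f a ≠ f b) ∧
        ∀ c : Fin n, (∃ u, f u = c) → ∃ v, ∀ u, f u = c → G.Adj v u)
    (hlt : ∀ m < n, ¬ ∃ f : V → Fin m, (∀ a b, G.Adj a b → f a ≠ f b) ∧
        ∀ c : Fin m, (∃ u, f u = c) → ∃ v, ∀ u, f u = c → G.Adj v u) :
    domChromatic G = n := by
  have h1 : n ∈ {n | ∃ C : G.Coloring (Fin n), IsDomColoring G C} :=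
    (mem_S_iff G n).mpr hmem
  have h2 := Nat.sInf_le h1
  have h3 := Nat.sInf_mem (⟨n, h1⟩ :
    Set.Nonempty {n | ∃ C : G.Coloring (Fin n), IsDomColoring G C})
  rcases lt_or_eq_of_le h2 with h | h
  · exact absurd ((mem_S_iff G _).mp h3) (hlt _ h)
  · exact h

set_option maxRecDepth 10000 in
set_option maxHeartbeats 2000000 in
theorem exists_deleteEdge_sharp :
    ∃ (V : Type) (G : SimpleGraph V) (e : Sym2 V), G.Connected ∧ e ∈ G.edgeSet ∧
      ¬ G.IsBridge e ∧ domChromatic (G.deleteEdges {e}) = domChromatic G + 2 := by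
  refine ⟨Fin 6, G6, s(3,5), ?_, ?_, ?_, ?_⟩
  · have h3 : ∀ v : Fin 6, G6.Reachable 3 v := by
      have a03 : G6.Adj 0 3 := by decide
      have a14 : G6.Adj 1 4 := by decide
      have a25 : G6.Adj 2 5 := by decide
      have a34 : G6.Adj 3 4 := by decide
      have a35 : G6.Adj 3 5 := by decide
      intro v
      fin_cases v
      · exact a03.symm.reachable
      · exact a34.reachable.trans a14.symm.reachable
      · exact a35.reachable.trans a25.symm.reachable
      · exact Reachable.refl _
      · exact a34.reachable
      · exact a35.reachable
    exact SimpleGraph.Connected.mk (fun u v => (h3 u).symm.trans (h3 v))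
  · decide
  · rw [SimpleGraph.isBridge_iff]
    intro h
    have a34 : (G6.deleteEdges {s(3,5)}).Adj 3 4 := (del_adj 3 4).mpr rfl
    have a14 : (G6.deleteEdges {s(3,5)}).Adj 1 4 := (del_adj 1 4).mpr rfl
    have a15 : (G6.deleteEdges {s(3,5)}).Adj 1 5 := (del_adj 1 5).mpr rfl
    exact h ((a34.reachable.trans a14.symm.reachable).trans a15.reachable)
  · have hG : domChromatic G6 = 2 := by
      apply domChromatic_eq
      · exact ⟨![0, 1, 1, 1, 0, 0], by decide, by decide⟩
      · decide
    have hH : domChromatic (G6.deleteEdges {s((3:Fin 6),(5:Fin 6))}) = 4 := by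
      apply domChromatic_eq
      · exact ⟨![0, 1, 1, 2, 0, 3], by decide, by decide⟩
      · decide
    rw [hG, hH]
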